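/- arXiv:2002.06469 — 3 statements merged into one kernel-verified Lean document; each statement's English description precedes it below -/
import Mathlib

section
/- Let β ∈ (0,1) and let ℓ ≥ 2^(β/(1−β)). Then for every positive integer i, 2^(Σ_{j=1}^{i} β^j) · ℓ^(β^i) ≤ 2^(Σ_{k=1}^{i−1} β^k) · ℓ^(β^(i−1)). -/
theorem merge_reduce_level (β ℓ : ℝ) (hβ0 : 0 < β) (hβ1 : β < 1)
    (hℓ : (2 : ℝ) ^ (β / (1 - β)) ≤ ℓ) (i : ℕ) (hi : 1 ≤ i) :
    (2 : ℝ) ^ (∑ j ∈ Finset.Icc 1 i, β ^ j) * ℓ ^ (β ^ i) ≤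
      (2 : ℝ) ^ (∑ k ∈ Finset.Icc 1 (i - 1), β ^ k) * ℓ ^ (β ^ (i - 1)) := by
  obtain ⟨m, rfl⟩ : ∃ m, i = m + 1 := ⟨i - 1, (Nat.succ_pred_eq_of_pos hi).symm⟩
  have h1β : 0 < 1 - β := by linarith
  have hℓpos : 0 < ℓ := lt_of_lt_of_le (Real.rpow_pos_of_pos two_pos _) hℓ
  have hkey : 2 * ℓ ≤ ℓ ^ ((1 : ℝ) / β) := by
    have h2 : (2 : ℝ) ≤ ℓ ^ ((1 - β) / β) := by
      calc (2 : ℝ) = ((2 : ℝ) ^ (β / (1 - β))) ^ ((1 - β) / β) := by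
            rw [← Real.rpow_mul (by norm_num),
              show β / (1 - β) * ((1 - β) / β) = 1 by field_simp, Real.rpow_one]
        _ ≤ ℓ ^ ((1 - β) / β) := by
            apply Real.rpow_le_rpow (le_of_lt (Real.rpow_pos_of_pos two_pos _)) hℓ
            positivity
    calc 2 * ℓ ≤ ℓ ^ ((1 - β) / β) * ℓ := by nlinarith
      _ = ℓ ^ ((1 - β) / β) * ℓ ^ (1 : ℝ) := by rw [Real.rpow_one]
      _ = ℓ ^ ((1 - β) / β + 1) := by rw [← Real.rpow_add hℓpos]
      _ = ℓ ^ ((1 : ℝ) / β) := by congr 1; field_simp; ring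
  simp only [Nat.add_sub_cancel]
  rw [Finset.sum_Icc_succ_top (by omega : 1 ≤ m + 1), Real.rpow_add two_pos, mul_assoc]
  apply mul_le_mul_of_nonneg_left _ (le_of_lt (Real.rpow_pos_of_pos two_pos _))
  calc (2 : ℝ) ^ (β ^ (m + 1)) * ℓ ^ (β ^ (m + 1))
      = (2 * ℓ) ^ (β ^ (m + 1)) := by
        rw [Real.mul_rpow (by norm_num) hℓpos.le]
    _ ≤ (ℓ ^ ((1 : ℝ) / β)) ^ (β ^ (m + 1)) := by
        apply Real.rpow_le_rpow (by positivity) hkey (by positivity)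
    _ = ℓ ^ (β ^ m) := by
        rw [← Real.rpow_mul hℓpos.le]
        congr 1
        rw [pow_succ]
        field_simp
end

section
/- Let d ≥ 2 be even, n = C(d, d/2), and let P ⊆ ℝ^(d+1) × {±1} be the set of all labeled points p = (x, y) where x ∈ ℝ^d × {1}, exactly d/2 of the first d coordinates of x equal y·√(2/d) and the remaining d/2 of the first d coordinates equal 0, and the (d+1)-th coordinate equals 1 (with at least one point of each label). Then for every p ∈ P there exists w ∈ ℝ^(d+1) with ‖w_{1:d}‖² = d²/4 such that the hinge loss h(p, w) = max(1 − y⟨x, w⟩, 0) = 1 while h(q, w) = 0 for every q ∈ P with q ≠ p. -/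
/-- The hard instance point: among the first `d` coordinates, those indexed by `S`
equal `y * √(2/d)`, the rest are `0`, and the `(d+1)`-th coordinate equals `1`. -/
noncomputable def hardPoint (d : ℕ) (S : Finset (Fin d)) (y : ℝ) : Fin (d + 1) → ℝ :=
  fun i => if h : (i : ℕ) < d then (if (⟨i, h⟩ : Fin d) ∈ S then y * Real.sqrt (2 / d) else 0)
    else 1

theorem hard_instance_witness (d : ℕ) (hd2 : 2 ≤ d) (hdEven : Even d)
    (yl : Finset (Fin d) → ℝ) (hyl : ∀ S, yl S = 1 ∨ yl S = -1)
    (S₀ : Finset (Fin d)) (hS₀ : S₀.card = d / 2) :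
    ∃ w : Fin (d + 1) → ℝ,
      (∑ i : Fin d, (w i.castSucc) ^ 2 = (d : ℝ) ^ 2 / 4) ∧
      max (1 - yl S₀ * ∑ i, hardPoint d S₀ (yl S₀) i * w i) 0 = 1 ∧
      ∀ S : Finset (Fin d), S.card = d / 2 → S ≠ S₀ →
        max (1 - yl S * ∑ i, hardPoint d S (yl S) i * w i) 0 = 0 := by
  have hd0 : (0:ℝ) < d := by positivity
  set w : Fin (d + 1) → ℝ := fun j =>
    if h : (j : ℕ) < d then (if (⟨j, h⟩ : Fin d) ∈ S₀ then 0 else Real.sqrt (d / 2)) else 0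
    with hw
  have hwcs : ∀ i : Fin d, w i.castSucc = if i ∈ S₀ then 0 else Real.sqrt (d / 2) := by
    intro i
    simp [hw, i.isLt, Fin.castSucc]
  have hwlast : w (Fin.last d) = 0 := by simp [hw]
  have hsq : Real.sqrt (d / 2) ^ 2 = (d : ℝ) / 2 := Real.sq_sqrt (by positivity)
  have hprod : Real.sqrt (2 / d) * Real.sqrt (d / 2) = 1 := by
    rw [← Real.sqrt_mul (by positivity)]
    rw [show (2 / (d:ℝ)) * ((d:ℝ) / 2) = 1 by field_simp]
    exact Real.sqrt_one
  have hhalf : ((d / 2 : ℕ) : ℝ) = (d : ℝ) / 2 := by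
    obtain ⟨k, hk⟩ := hdEven
    subst hk
    have : (k + k) / 2 = k := by omega
    rw [this]; push_cast; ring
  -- sum of squares
  have hsumsq : ∑ i : Fin d, (w i.castSucc) ^ 2 = (d : ℝ) ^ 2 / 4 := by
    have : ∑ i : Fin d, (w i.castSucc) ^ 2
        = ∑ i : Fin d, (if i ∈ S₀ then 0 else (d:ℝ)/2) := by
      refine Finset.sum_congr rfl fun i _ => ?_
      rw [hwcs i]
      split_ifs with h
      · simp
      · exact hsq
    have hcard : (Finset.univ.filter (fun i => ¬ i ∈ S₀)).card = d - d / 2 := by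
      have := S₀.card_compl
      simp only [Finset.filter_not] at *
      simpa [Finset.compl_eq_univ_sdiff, hS₀] using this
    rw [this, Finset.sum_ite, Finset.sum_const, Finset.sum_const, hcard]
    have : ((d - d/2 : ℕ) : ℝ) = (d:ℝ)/2 := by
      obtain ⟨k, hk⟩ := hdEven
      have h1 : d - d/2 = d/2 := by omega
      rw [h1, hhalf]
    rw [smul_zero, zero_add, nsmul_eq_mul, this]
    ring
  -- the general inner-product computation
  have hinner : ∀ (S : Finset (Fin d)) (y : ℝ),
      ∑ i, hardPoint d S y i * w i = y * ((S \ S₀).card : ℝ) := by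
    intro S y
    rw [Fin.sum_univ_castSucc]
    have hlastterm : hardPoint d S y (Fin.last d) * w (Fin.last d) = 0 := by
      rw [hwlast]; ring
    rw [hlastterm, add_zero]
    have : ∀ i : Fin d, hardPoint d S y i.castSucc * w i.castSucc
        = if i ∈ S \ S₀ then y else 0 := by
      intro i
      rw [hwcs i]
      have hcast : hardPoint d S y i.castSucc
          = if i ∈ S then y * Real.sqrt (2 / d) else 0 := by
        simp [hardPoint, i.isLt, Fin.castSucc]
      rw [hcast]
      by_cases h1 : i ∈ S <;> by_cases h2 : i ∈ S₀
      · simp [h1, h2, Finset.mem_sdiff]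
      · rw [if_pos h1, if_neg h2, if_pos (Finset.mem_sdiff.mpr ⟨h1, h2⟩),
          mul_assoc, hprod, mul_one]
      · simp [h1, h2, Finset.mem_sdiff]
      · simp [h1, h2, Finset.mem_sdiff]
    rw [Finset.sum_congr rfl fun i _ => this i]
    rw [Finset.sum_ite, Finset.sum_const, Finset.sum_const, smul_zero, add_zero]
    have : Finset.univ.filter (fun i => i ∈ S \ S₀) = S \ S₀ := by
      ext i; simp
    rw [this, nsmul_eq_mul, mul_comm]
  refine ⟨w, hsumsq, ?_, ?_⟩
  · rw [hinner S₀ (yl S₀)]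
    simp
  · intro S hScard hSne
    rw [hinner S (yl S)]
    have hy2 : yl S * yl S = 1 := by rcases hyl S with h | h <;> rw [h] <;> ring
    have hne : (S \ S₀).Nonempty := by
      rw [Finset.sdiff_nonempty]
      intro hsub
      exact hSne (Finset.eq_of_subset_of_card_le hsub (by omega))
    have h1 : (1:ℝ) ≤ ((S \ S₀).card : ℝ) := by
      exact_mod_cast Finset.card_pos.mpr hne
    rw [max_eq_right]
    nlinarith
end

section
/- Under the hard-instance construction of the SVM lower bound, the sensitivity of every point p satisfies s(p) ≥ (d²/(8n) + λ)/(d²/8 + λ), and consequently Σ_{p∈P} s(p) ≥ (d²/8 + nλ)/(d²/8 + λ). -/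
theorem sensitivity_lower_bound (d : ℕ) (hd2 : 2 ≤ d) (hdEven : Even d)
    (lam : ℝ) (hlam0 : 0 < lam) (hlam1 : lam ≤ 1)
    (yl : Finset (Fin d) → ℝ) (hyl : ∀ S, yl S = 1 ∨ yl S = -1)
    (n : ℕ) (hn : n = Nat.choose d (d / 2))
    (f : Finset (Fin d) → (Fin (d + 1) → ℝ) → ℝ)
    (hf : ∀ S w, f S w = (∑ i : Fin d, (w i.castSucc) ^ 2) / (2 * n) +
      lam * max (1 - yl S * ∑ i, hardPoint d S (yl S) i * w i) 0)
    (F : (Fin (d + 1) → ℝ) → ℝ)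
    (hF : ∀ w, F w = ∑ S ∈ Finset.univ.filter (fun S : Finset (Fin d) => S.card = d / 2), f S w)
    (s : Finset (Fin d) → ℝ)
    (hs : ∀ S, S.card = d / 2 → ∀ w, F w ≠ 0 → f S w / F w ≤ s S) :
    (∀ S : Finset (Fin d), S.card = d / 2 →
      ((d : ℝ) ^ 2 / (8 * n) + lam) / ((d : ℝ) ^ 2 / 8 + lam) ≤ s S) ∧
    ((d : ℝ) ^ 2 / 8 + n * lam) / ((d : ℝ) ^ 2 / 8 + lam) ≤
      ∑ S ∈ Finset.univ.filter (fun S : Finset (Fin d) => S.card = d / 2), s S := by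
  obtain ⟨m, hm⟩ := hdEven
  have hd : d = 2 * m := by omega
  have hdm : d / 2 = m := by omega
  have hm1 : 1 ≤ m := by omega
  have hn1 : 1 ≤ n := by rw [hn]; exact Nat.choose_pos (Nat.div_le_self d 2)
  have hd0 : (0 : ℝ) < d := by exact_mod_cast (by omega : 0 < d)
  have hn0 : (0 : ℝ) < n := by exact_mod_cast hn1
  have hdr : (d : ℝ) = 2 * m := by exact_mod_cast hd
  have hm0 : (0 : ℝ) < m := by exact_mod_cast hm1
  set P := Finset.univ.filter (fun S : Finset (Fin d) => S.card = d / 2) with hP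
  have hcardP : P.card = n := by
    rw [hn, hP]
    have : Finset.univ.filter (fun S : Finset (Fin d) => S.card = d / 2)
        = Finset.powersetCard (d / 2) Finset.univ := by
      rw [Finset.powersetCard_eq_filter, Finset.powerset_univ]
    rw [this, Finset.card_powersetCard, Finset.card_univ, Fintype.card_fin]
  have hA : (d : ℝ) ^ 2 / 8 = (m : ℝ) ^ 2 / 2 := by rw [hdr]; ring
  have hB : (d : ℝ) ^ 2 / (8 * n) = (m : ℝ) ^ 2 / (2 * n) := by rw [hdr]; ring
  have hDpos : (0 : ℝ) < (d : ℝ) ^ 2 / 8 + lam := by positivity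
  have key : ∀ S : Finset (Fin d), S.card = d / 2 →
      ((d : ℝ) ^ 2 / (8 * n) + lam) / ((d : ℝ) ^ 2 / 8 + lam) ≤ s S := by
    intro S hS
    set w : Fin (d + 1) → ℝ := fun i =>
      if h : (i : ℕ) < d then (if (⟨i, h⟩ : Fin d) ∈ S then 0 else Real.sqrt (d / 2)) else 0
      with hw
    have hwcast : ∀ i : Fin d, w i.castSucc = if i ∈ S then 0 else Real.sqrt (d / 2) := by
      intro i
      simp only [hw, Fin.coe_castSucc, i.isLt, dif_pos, Fin.eta]
    have hwlast : w (Fin.last d) = 0 := by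
      simp only [hw, Fin.val_last, lt_irrefl, dif_neg, not_false_iff]
    have hquad : ∑ i : Fin d, (w i.castSucc) ^ 2 = (m : ℝ) ^ 2 := by
      have h1 : ∀ i : Fin d, (w i.castSucc) ^ 2 = if i ∈ S then 0 else (m : ℝ) := by
        intro i
        rw [hwcast i]
        by_cases h : i ∈ S
        · simp [h]
        · simp only [h, if_false]
          rw [Real.sq_sqrt (by positivity)]
          rw [hdr]; ring
      rw [Finset.sum_congr rfl fun i _ => h1 i, Finset.sum_ite, Finset.sum_const_zero,
        Finset.sum_const, zero_add, nsmul_eq_mul]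
      have : (Finset.univ.filter (fun i : Fin d => ¬ i ∈ S)).card = m := by
        rw [Finset.filter_not, Finset.filter_mem_eq_inter, Finset.univ_inter,
          Finset.card_sdiff_of_subset (Finset.subset_univ S), Finset.card_univ, Fintype.card_fin, hS]
        omega
      rw [this]; ring
    have hprod : Real.sqrt (2 / d) * Real.sqrt (d / 2) = 1 := by
      rw [← Real.sqrt_mul (by positivity)]
      rw [show (2 / (d : ℝ)) * ((d : ℝ) / 2) = 1 by field_simp]
      exact Real.sqrt_one
    have hip : ∀ Q : Finset (Fin d),
        ∑ i, hardPoint d Q (yl Q) i * w i = yl Q * ((Q \ S).card : ℝ) := by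
      intro Q
      rw [Fin.sum_univ_castSucc]
      have hlastQ : hardPoint d Q (yl Q) (Fin.last d) * w (Fin.last d) = 0 := by
        rw [hwlast, mul_zero]
      rw [hlastQ, add_zero]
      have h2 : ∀ i : Fin d, hardPoint d Q (yl Q) i.castSucc * w i.castSucc
          = if i ∈ Q \ S then yl Q else 0 := by
        intro i
        have hx : hardPoint d Q (yl Q) i.castSucc
            = if i ∈ Q then yl Q * Real.sqrt (2 / d) else 0 := by
          simp only [hardPoint, Fin.coe_castSucc, i.isLt, dif_pos, Fin.eta]
        rw [hx, hwcast i]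
        by_cases hq : i ∈ Q <;> by_cases hsi : i ∈ S
        · simp [hq, hsi, Finset.mem_sdiff]
        · rw [if_pos hq, if_neg hsi,
            if_pos (Finset.mem_sdiff.2 ⟨hq, hsi⟩), mul_assoc, hprod, mul_one]
        · simp [hq, hsi, Finset.mem_sdiff]
        · simp [hq, hsi, Finset.mem_sdiff]
      rw [Finset.sum_congr rfl fun i _ => h2 i, Finset.sum_ite_mem, Finset.univ_inter,
        Finset.sum_const, nsmul_eq_mul, mul_comm]
    have hSP : S ∈ P := Finset.mem_filter.2 ⟨Finset.mem_univ S, hS⟩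
    have hfQ : ∀ Q ∈ P, f Q w = (m : ℝ) ^ 2 / (2 * n) + (if Q = S then lam else 0) := by
      intro Q hQ
      rw [hf, hquad, hip]
      have hy2 : yl Q * (yl Q * ((Q \ S).card : ℝ)) = ((Q \ S).card : ℝ) := by
        rcases hyl Q with h | h <;> rw [h] <;> ring
      rw [hy2]
      by_cases hQS : Q = S
      · subst hQS
        simp [Finset.sdiff_self]
      · have hQcard : Q.card = d / 2 := (Finset.mem_filter.1 hQ).2
        have hne : (Q \ S).Nonempty := by
          rw [Finset.sdiff_nonempty]
          intro hsub
          exact hQS (Finset.eq_of_subset_of_card_le hsub (by rw [hS, hQcard]))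
        have h1 : (1 : ℝ) ≤ ((Q \ S).card : ℝ) := by
          exact_mod_cast Nat.one_le_iff_ne_zero.2 (Finset.card_ne_zero_of_mem hne.choose_spec)
        rw [max_eq_right (by linarith), mul_zero, if_neg hQS]
    have hFw : F w = (m : ℝ) ^ 2 / 2 + lam := by
      rw [hF w, Finset.sum_congr rfl hfQ, Finset.sum_add_distrib, Finset.sum_const, hcardP,
        Finset.sum_ite_eq' P S (fun _ => lam), if_pos hSP, nsmul_eq_mul]
      have : (n : ℝ) ≠ 0 := ne_of_gt hn0
      field_simp
    have hfS : f S w = (m : ℝ) ^ 2 / (2 * n) + lam := by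
      rw [hfQ S hSP, if_pos rfl]
    have hFne : F w ≠ 0 := by rw [hFw]; positivity
    have hrat := hs S hS w hFne
    rw [hA, hB]
    calc ((m : ℝ) ^ 2 / (2 * n) + lam) / ((m : ℝ) ^ 2 / 2 + lam)
        = f S w / F w := by rw [hfS, hFw]
      _ ≤ s S := hrat
  refine ⟨key, ?_⟩
  have hsum : P.card • (((d : ℝ) ^ 2 / (8 * n) + lam) / ((d : ℝ) ^ 2 / 8 + lam)) ≤
      ∑ S ∈ P, s S :=
    Finset.card_nsmul_le_sum P s _ (fun S hSP => key S (Finset.mem_filter.1 hSP).2)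
  rw [hcardP, nsmul_eq_mul] at hsum
  refine le_trans (le_of_eq ?_) hsum
  have hne1 : ((d : ℝ) ^ 2 / 8 + lam) ≠ 0 := ne_of_gt hDpos
  have hne2 : (n : ℝ) ≠ 0 := ne_of_gt hn0
  field_simp
end
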